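/- Let A be an M×N partial sign matrix and let d ≥ 1. If there exists a linear map g : ℝ^N → ℝ^d (i.e., g : (Fin N → ℝ) →ₗ[ℝ] (Fin d → ℝ)) such that g(x) ≠ 0 for every x in the crosspolytope realization |S(A)|, then the sign-rank of A is at most d. (This is the inequality srank(A) − 1 ≤ ind_lin(S(A)) from the paper's Main Lemma 1.) -/

import Mathlib

open scoped RealInnerProductSpace Pointwise

/-- The realized simplex of row `i` of the partial sign matrix `A`:
the convex hull of `{e_j : A i j = 1} ∪ {-e_j : A i j = -1}`. -/
noncomputable def rowSimplex {M N : ℕ} (A : Fin M → Fin N → ℤ) (i : Fin M) :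
    Set (Fin N → ℝ) :=
  convexHull ℝ
    ({x | ∃ j, A i j = 1 ∧ x = Pi.single j (1 : ℝ)} ∪
     {x | ∃ j, A i j = -1 ∧ x = -Pi.single j (1 : ℝ)})

/-- The crosspolytope realization `|S(A)|` of the sign complex of `A`. -/
noncomputable def signComplexReal {M N : ℕ} (A : Fin M → Fin N → ℤ) :
    Set (Fin N → ℝ) :=
  ⋃ i, (rowSimplex A i ∪ -(rowSimplex A i))

/-- If there is a linear map `g : ℝ^N → ℝ^d` avoiding the origin on `|S(A)|`,
then the sign-rank of `A` is at most `d`, i.e. `srank(A) - 1 ≤ ind_lin(S(A))`. -/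
theorem srank_le_linear_index {M N : ℕ} (d : ℕ) (hd : 1 ≤ d)
    (A : Fin M → Fin N → ℤ)
    (hA : ∀ i j, A i j = -1 ∨ A i j = 0 ∨ A i j = 1)
    (hlin : ∃ g : (Fin N → ℝ) →ₗ[ℝ] (Fin d → ℝ),
      ∀ x ∈ signComplexReal A, g x ≠ 0) :
    ∃ (u : Fin M → EuclideanSpace ℝ (Fin d))
      (v : Fin N → EuclideanSpace ℝ (Fin d)),
      ∀ i j, A i j ≠ 0 → 0 < (A i j : ℝ) * ⟪u i, v j⟫ := by
  classical
  obtain ⟨g, hg⟩ := hlin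
  set e : (Fin d → ℝ) ≃ₗ[ℝ] EuclideanSpace ℝ (Fin d) :=
    (WithLp.linearEquiv 2 ℝ (Fin d → ℝ)).symm with he
  set φ : (Fin N → ℝ) →ₗ[ℝ] EuclideanSpace ℝ (Fin d) := e.toLinearMap ∘ₗ g with hφ
  set v : Fin N → EuclideanSpace ℝ (Fin d) := fun j => φ (Pi.single j 1) with hv
  have key : ∀ i : Fin M, ∃ u : EuclideanSpace ℝ (Fin d),
      ∀ j, A i j ≠ 0 → 0 < ⟪u, (A i j : ℝ) • v j⟫ := by
    intro i
    by_cases hrow : ∀ j, A i j = 0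
    · exact ⟨0, fun j hj => absurd (hrow j) hj⟩
    set T : Set (Fin N → ℝ) :=
      ({x | ∃ j, A i j = 1 ∧ x = Pi.single j (1 : ℝ)} ∪
       {x | ∃ j, A i j = -1 ∧ x = -Pi.single j (1 : ℝ)}) with hT
    set S : Set (EuclideanSpace ℝ (Fin d)) :=
      (fun j : Fin N => (A i j : ℝ) • v j) '' {j | A i j ≠ 0} with hS
    have himg : φ '' T = S := by
      ext x
      constructor
      · rintro ⟨y, hy | hy, rfl⟩
        · obtain ⟨j, hj, rfl⟩ := hy
          refine ⟨j, by simp [hj], ?_⟩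
          simp [hj, hv]
        · obtain ⟨j, hj, rfl⟩ := hy
          refine ⟨j, by simp [hj], ?_⟩
          simp [hj, hv]
      · rintro ⟨j, hj, rfl⟩
        rcases hA i j with h | h | h
        · refine ⟨-Pi.single j 1, Or.inr ⟨j, h, rfl⟩, ?_⟩
          simp [h, hv]
        · exact absurd h hj
        · refine ⟨Pi.single j 1, Or.inl ⟨j, h, rfl⟩, ?_⟩
          simp [h, hv]
    have hKeq : convexHull ℝ S = φ '' rowSimplex A i := by
      rw [rowSimplex, φ.image_convexHull, himg]
    have h0 : (0 : EuclideanSpace ℝ (Fin d)) ∉ convexHull ℝ S := by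
      rw [hKeq]
      rintro ⟨x, hx, hx0⟩
      refine hg x ?_ ?_
      · exact Set.mem_iUnion.2 ⟨i, Or.inl hx⟩
      · have := congrArg e.symm hx0
        simpa [hφ] using this
    have hclosed : IsClosed (convexHull ℝ S) :=
      (Set.Finite.isCompact_convexHull ℝ (Set.toFinite S)).isClosed
    obtain ⟨f, c, hfc, hc⟩ := geometric_hahn_banach_closed_point
      (convex_convexHull ℝ S) hclosed h0
    have hc0 : c < 0 := by simpa using hc
    refine ⟨-(InnerProductSpace.toDual ℝ _).symm f, fun j hj => ?_⟩
    have hmem : (A i j : ℝ) • v j ∈ convexHull ℝ S :=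
      subset_convexHull ℝ S ⟨j, hj, rfl⟩
    have h1 : f ((A i j : ℝ) • v j) < c := hfc _ hmem
    have h2 : ⟪-(InnerProductSpace.toDual ℝ _).symm f, (A i j : ℝ) • v j⟫
        = -(f ((A i j : ℝ) • v j)) := by
      rw [inner_neg_left, InnerProductSpace.toDual_symm_apply]
    rw [h2]
    linarith
  choose u hu using key
  refine ⟨u, v, fun i j hj => ?_⟩
  have := hu i j hj
  rwa [real_inner_smul_right] at this
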